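/- Let (S,K,I) be a split graph such that K = ⋃_{v∈I} N_S(v) and |I| ≥ 2. Suppose the factor graph Φ(S) is simple (σ_{uv}(S) ≤ 1 for all distinct u,v ∈ I) and the simple graph on I with u adjacent to v iff σ_{uv}(S) = 1 is connected. Then S is homogeneous: it is balanced and all vertices of I have the same degree in S. -/

import Mathlib

open SimpleGraph

/-- `T` is a 4-element vertex subset of `S` whose induced subgraph is a path on 4 vertices. -/
def IsInducedP4 {V : Type*} (S : SimpleGraph V) (T : Finset V) : Prop :=
  T.card = 4 ∧ Nonempty (S.induce (T : Set V) ≃g pathGraph 4)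

/-- `σ_{uv}(S)`: the number of induced `P4`'s of `S` containing both `u` and `v`. -/
noncomputable def sigmaP4 {V : Type*} (S : SimpleGraph V) (u v : V) : ℕ :=
  Nat.card {T : Finset V // IsInducedP4 S T ∧ u ∈ T ∧ v ∈ T}

/-- The simple graph on vertex set `I` where `u` is adjacent to `v` iff `σ_{uv}(S) = 1`. -/
noncomputable def phiEq {V : Type*} (S : SimpleGraph V) (I : Finset V) :
    SimpleGraph {x // x ∈ I} :=
  SimpleGraph.fromRel (fun u v => sigmaP4 S u.1 v.1 = 1)

lemma sigmaP4_comm {V : Type*} (S : SimpleGraph V) (u v : V) :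
    sigmaP4 S u v = sigmaP4 S v u :=
  Nat.card_congr (Equiv.subtypeEquivRight (fun T => by tauto))

lemma isInducedP4_of_chain {V : Type*} [DecidableEq V] (S : SimpleGraph V)
    {u a b v : V} (hub : u ≠ b) (hav : a ≠ v) (huv : u ≠ v)
    (h1 : S.Adj u a) (h2 : S.Adj a b) (h3 : S.Adj b v)
    (n1 : ¬ S.Adj u b) (n2 : ¬ S.Adj u v) (n3 : ¬ S.Adj a v) :
    IsInducedP4 S {u, a, b, v} := by
  have hua : u ≠ a := h1.ne
  have hab : a ≠ b := h2.ne
  have hbv : b ≠ v := h3.ne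
  set T : Finset V := {u, a, b, v} with hT
  have hcard : T.card = 4 := by
    rw [hT]
    rw [Finset.card_insert_of_notMem (by simp [hua, hub, huv]),
        Finset.card_insert_of_notMem (by simp [hab, hav]),
        Finset.card_insert_of_notMem (by simp [hbv]), Finset.card_singleton]
  refine ⟨hcard, ?_⟩
  let m : Fin 4 → V := ![u, a, b, v]
  have hmem : ∀ i, m i ∈ T := by
    intro i; fin_cases i <;> simp [m, hT]
  let g : Fin 4 → (T : Set V) := fun i => ⟨m i, hmem i⟩
  have hinj : Function.Injective g := by
    intro i j hij
    have : m i = m j := congrArg Subtype.val hij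
    fin_cases i <;> fin_cases j <;> simp_all [m]
  have hsurj : Function.Surjective g := by
    rintro ⟨x, hx⟩
    simp only [hT, Finset.coe_insert, Set.mem_insert_iff, Finset.coe_singleton,
      Set.mem_singleton_iff] at hx
    rcases hx with rfl | rfl | rfl | rfl
    · exact ⟨0, rfl⟩
    · exact ⟨1, rfl⟩
    · exact ⟨2, rfl⟩
    · exact ⟨3, rfl⟩
  let e : Fin 4 ≃ (T : Set V) := Equiv.ofBijective g ⟨hinj, hsurj⟩
  have n1' : ¬ S.Adj b u := fun h => n1 h.symm
  have n2' : ¬ S.Adj v u := fun h => n2 h.symm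
  have n3' : ¬ S.Adj v a := fun h => n3 h.symm
  have hadj : ∀ i j : Fin 4, S.Adj (m i) (m j) ↔ (pathGraph 4).Adj i j := by
    intro i j
    fin_cases i <;> fin_cases j <;>
      simp [m, pathGraph_adj, h1, h2, h3, h1.symm, h2.symm, h3.symm, n1, n2, n3,
        n1', n2', n3'] <;> decide
  refine ⟨⟨e.symm, ?_⟩⟩
  intro x y
  obtain ⟨i, rfl⟩ := e.surjective x
  obtain ⟨j, rfl⟩ := e.surjective y
  simp only [Equiv.symm_apply_apply]
  exact (hadj i j).symm

lemma extractP4 {V : Type*} [Fintype V] [DecidableEq V] (S : SimpleGraph V)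
    (K I : Finset V)
    (hpart : K ∪ I = Finset.univ) (hK : S.IsClique (K : Set V))
    (hI : Sᶜ.IsClique (I : Set V))
    {u v : V} (hu : u ∈ I) (hv : v ∈ I) (huv : u ≠ v)
    {T : Finset V} (hT : IsInducedP4 S T) (huT : u ∈ T) (hvT : v ∈ T) :
    ∃ a b, S.Adj u a ∧ ¬ S.Adj v a ∧ S.Adj v b ∧ ¬ S.Adj u b ∧ T = {u, a, b, v} := by
  obtain ⟨hT4, ⟨e⟩⟩ := hT
  have hInadj : ∀ x y, x ∈ I → y ∈ I → x ≠ y → ¬ S.Adj x y := by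
    intro x y hx hy hxy
    have := hI hx hy hxy
    rw [compl_adj] at this
    exact this.2
  have hmemK : ∀ x w, x ∈ I → S.Adj x w → w ∈ K := by
    intro x w hx hxw
    have : w ∈ K ∪ I := hpart ▸ Finset.mem_univ w
    rcases Finset.mem_union.mp this with h | h
    · exact h
    · exact absurd hxw (hInadj x w hx h hxw.ne)
  have hKadj : ∀ x y, x ∈ K → y ∈ K → x ≠ y → S.Adj x y := fun x y hx hy => hK hx hy
  let f : Fin 4 → V := fun i => ((e.symm i : (T : Set V)) : V)
  have hfinj : Function.Injective f :=
    fun i j h => e.symm.injective (Subtype.ext h)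
  have hfadj : ∀ i j : Fin 4, S.Adj (f i) (f j) ↔ (pathGraph 4).Adj i j := by
    intro i j
    exact e.symm.map_rel_iff
  have hTim : T = Finset.image f Finset.univ := by
    apply Finset.eq_of_subset_of_card_le
    · intro x hx
      obtain ⟨i, hi⟩ := e.symm.surjective ⟨x, hx⟩
      exact Finset.mem_image.mpr ⟨i, Finset.mem_univ i, congrArg Subtype.val hi⟩
    · rw [Finset.card_image_of_injective _ hfinj, hT4]; simp
  have hTset : T = {f 0, f 1, f 2, f 3} := by
    rw [hTim]
    have : (Finset.univ : Finset (Fin 4)) = {0, 1, 2, 3} := by decide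
    rw [this]
    simp [Finset.image_insert]
  obtain ⟨iu, _, hiu⟩ := Finset.mem_image.mp (hTim ▸ huT)
  obtain ⟨iv, _, hiv⟩ := Finset.mem_image.mp (hTim ▸ hvT)
  subst hiu hiv
  have hne : iu ≠ iv := fun h => huv (by rw [h])
  have hnadj : ¬ (pathGraph 4).Adj iu iv := fun h => hInadj _ _ hu hv huv ((hfadj _ _).mpr h)
  have contrK : ∀ i j k l : Fin 4, f i = f iu ∨ f i = f iv → (pathGraph 4).Adj k i →
      f j = f iu ∨ f j = f iv → (pathGraph 4).Adj l j → ¬ (pathGraph 4).Adj k l →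
      k ≠ l → False := by
    intro i j k l hi hk hj hl hkl hklne
    have hiI : f i ∈ I := by rcases hi with h | h <;> rw [h] <;> assumption
    have hjI : f j ∈ I := by rcases hj with h | h <;> rw [h] <;> assumption
    have hkK : f k ∈ K := hmemK _ _ hiI ((hfadj i k).mpr hk.symm)
    have hlK : f l ∈ K := hmemK _ _ hjI ((hfadj j l).mpr hl.symm)
    have : S.Adj (f k) (f l) := hKadj _ _ hkK hlK (fun h => hklne (hfinj h))
    exact hkl ((hfadj k l).mp this)
  have hP : ∀ i j : Fin 4, (i.val + 1 = j.val ∨ j.val + 1 = i.val) → (pathGraph 4).Adj i j :=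
    fun i j h => pathGraph_adj.mpr h
  have hNP : ∀ i j : Fin 4, ¬(i.val + 1 = j.val ∨ j.val + 1 = i.val) → ¬(pathGraph 4).Adj i j :=
    fun i j h ha => h (pathGraph_adj.mp ha)
  have hA : ∀ i j : Fin 4, (i.val + 1 = j.val ∨ j.val + 1 = i.val) → S.Adj (f i) (f j) :=
    fun i j h => (hfadj i j).mpr (hP i j h)
  have hN : ∀ i j : Fin 4, ¬(i.val + 1 = j.val ∨ j.val + 1 = i.val) → ¬ S.Adj (f i) (f j) :=
    fun i j h ha => hNP i j h ((hfadj i j).mp ha)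
  fin_cases iu <;> fin_cases iv
  · exact absurd rfl hne
  · exact absurd (hP 0 1 (by decide)) hnadj
  · exact absurd (contrK 0 2 1 3 (Or.inl rfl) (hP 1 0 (by decide)) (Or.inr rfl)
      (hP 3 2 (by decide)) (hNP 1 3 (by decide)) (by decide)) id
  · exact ⟨f 1, f 2, hA 0 1 (by decide), hN 3 1 (by decide), hA 3 2 (by decide),
      hN 0 2 (by decide), hTset⟩
  · exact absurd (hP 1 0 (by decide)) hnadj
  · exact absurd rfl hne
  · exact absurd (hP 1 2 (by decide)) hnadj
  · exact absurd (contrK 1 3 0 2 (Or.inl rfl) (hP 0 1 (by decide)) (Or.inr rfl)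
      (hP 2 3 (by decide)) (hNP 0 2 (by decide)) (by decide)) id
  · exact absurd (contrK 0 2 1 3 (Or.inr rfl) (hP 1 0 (by decide)) (Or.inl rfl)
      (hP 3 2 (by decide)) (hNP 1 3 (by decide)) (by decide)) id
  · exact absurd (hP 2 1 (by decide)) hnadj
  · exact absurd rfl hne
  · exact absurd (hP 2 3 (by decide)) hnadj
  · refine ⟨f 2, f 1, hA 3 2 (by decide), hN 0 2 (by decide), hA 0 1 (by decide),
      hN 3 1 (by decide), ?_⟩
    rw [hTset]; ext x; simp only [Finset.mem_insert, Finset.mem_singleton]; tauto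
  · exact absurd (contrK 1 3 0 2 (Or.inr rfl) (hP 0 1 (by decide)) (Or.inl rfl)
      (hP 2 3 (by decide)) (hNP 0 2 (by decide)) (by decide)) id
  · exact absurd (hP 3 2 (by decide)) hnadj
  · exact absurd rfl hne

lemma sigma_one_cards {V : Type*} [Fintype V] [DecidableEq V] (S : SimpleGraph V)
    [DecidableRel S.Adj] (K I : Finset V)
    (hpart : K ∪ I = Finset.univ) (hK : S.IsClique (K : Set V))
    (hI : Sᶜ.IsClique (I : Set V))
    {u v : V} (hu : u ∈ I) (hv : v ∈ I) (huv : u ≠ v)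
    (hσ : sigmaP4 S u v = 1) :
    (S.neighborFinset u \ S.neighborFinset v).card = 1 ∧
      (S.neighborFinset v \ S.neighborFinset u).card = 1 := by
  have hInadj : ∀ x y, x ∈ I → y ∈ I → x ≠ y → ¬ S.Adj x y := by
    intro x y hx hy hxy
    have := hI hx hy hxy
    rw [compl_adj] at this
    exact this.2
  have hmemK : ∀ x w, x ∈ I → S.Adj x w → w ∈ K := by
    intro x w hx hxw
    have : w ∈ K ∪ I := hpart ▸ Finset.mem_univ w
    rcases Finset.mem_union.mp this with h | h
    · exact h
    · exact absurd hxw (hInadj x w hx h hxw.ne)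
  have huvn : ¬ S.Adj u v := hInadj u v hu hv huv
  rw [sigmaP4, Nat.card_eq_one_iff_unique] at hσ
  obtain ⟨hsub, ⟨⟨T, hT, huT, hvT⟩⟩⟩ := hσ
  obtain ⟨a, b, hua, hva, hvb, hub, hTeq⟩ := extractP4 S K I hpart hK hI hu hv huv hT huT hvT
  have haK : a ∈ K := hmemK _ _ hu hua
  have hbK : b ∈ K := hmemK _ _ hv hvb
  have hubne : u ≠ b := fun h => huvn (h ▸ hvb).symm
  have build1 : ∀ a', S.Adj u a' → ¬ S.Adj v a' → IsInducedP4 S {u, a', b, v} := by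
    intro a' h1 h2
    have ha'K : a' ∈ K := hmemK _ _ hu h1
    have ha'b : a' ≠ b := fun h => hub (h ▸ h1)
    exact isInducedP4_of_chain S hubne (fun h => huvn (h ▸ h1)) huv h1
      (hK ha'K hbK ha'b) hvb.symm hub huvn (fun h => h2 h.symm)
  have build2 : ∀ b', S.Adj v b' → ¬ S.Adj u b' → IsInducedP4 S {u, a, b', v} := by
    intro b' h1 h2
    have hb'K : b' ∈ K := hmemK _ _ hv h1
    have hab' : a ≠ b' := fun h => h2 (by rw [← h]; exact hua)
    exact isInducedP4_of_chain S (fun h => huvn (by rw [← h] at h1; exact h1.symm))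
      (fun h => huvn (by rw [← h]; exact hua)) huv hua (hK haK hb'K hab') h1.symm h2 huvn
      (fun h => hva h.symm)
  constructor
  · rw [Finset.card_eq_one]
    refine ⟨a, Finset.eq_singleton_iff_unique_mem.mpr ⟨?_, ?_⟩⟩
    · simp only [Finset.mem_sdiff, SimpleGraph.mem_neighborFinset]
      exact ⟨hua, hva⟩
    · intro a' ha'
      simp only [Finset.mem_sdiff, SimpleGraph.mem_neighborFinset] at ha'
      by_contra hne
      have t1 : IsInducedP4 S {u, a, b, v} := build1 a hua hva
      have t2 : IsInducedP4 S {u, a', b, v} := build1 a' ha'.1 ha'.2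
      have heq := @Subsingleton.elim _ hsub
        ⟨{u, a, b, v}, t1, by simp, by simp⟩ ⟨{u, a', b, v}, t2, by simp, by simp⟩
      have hTeq2 : ({u, a, b, v} : Finset V) = {u, a', b, v} :=
        congrArg Subtype.val heq
      have ha'mem : a' ∈ ({u, a, b, v} : Finset V) := by
        rw [hTeq2]; simp
      simp only [Finset.mem_insert, Finset.mem_singleton] at ha'mem
      rcases ha'mem with h | h | h | h
      · exact S.loopless.irrefl u (h ▸ ha'.1)
      · exact hne h
      · exact hub (h ▸ ha'.1)
      · exact huvn (h ▸ ha'.1)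
  · rw [Finset.card_eq_one]
    refine ⟨b, Finset.eq_singleton_iff_unique_mem.mpr ⟨?_, ?_⟩⟩
    · simp only [Finset.mem_sdiff, SimpleGraph.mem_neighborFinset]
      exact ⟨hvb, hub⟩
    · intro b' hb'
      simp only [Finset.mem_sdiff, SimpleGraph.mem_neighborFinset] at hb'
      by_contra hne
      have t1 : IsInducedP4 S {u, a, b, v} := build1 a hua hva
      have t2 : IsInducedP4 S {u, a, b', v} := build2 b' hb'.1 hb'.2
      have heq := @Subsingleton.elim _ hsub
        ⟨{u, a, b, v}, t1, by simp, by simp⟩ ⟨{u, a, b', v}, t2, by simp, by simp⟩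
      have hTeq2 : ({u, a, b, v} : Finset V) = {u, a, b', v} :=
        congrArg Subtype.val heq
      have hb'mem : b' ∈ ({u, a, b, v} : Finset V) := by
        rw [hTeq2]; simp
      simp only [Finset.mem_insert, Finset.mem_singleton] at hb'mem
      rcases hb'mem with h | h | h | h
      · have := hb'.1; rw [h] at this; exact huvn this.symm
      · exact hb'.2 (by rw [h]; exact hua)
      · exact hne h
      · exact S.loopless.irrefl v (h ▸ hb'.1)

theorem stmt11 {V : Type*} [Fintype V] [DecidableEq V] [Nonempty V]
    (S : SimpleGraph V) [DecidableRel S.Adj] (K I : Finset V)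
    (hpart : K ∪ I = Finset.univ) (hdisj : Disjoint K I)
    (hK : S.IsClique (K : Set V)) (hI : Sᶜ.IsClique (I : Set V))
    (hcov : I.biUnion (fun v => S.neighborFinset v) = K)
    (hI2 : 2 ≤ I.card)
    (hsimple : ∀ u ∈ I, ∀ v ∈ I, u ≠ v → sigmaP4 S u v ≤ 1)
    (hconn : (phiEq S I).Connected) :
    K.card = S.cliqueNum ∧ I.card = Sᶜ.cliqueNum ∧
      ∀ u ∈ I, ∀ v ∈ I, S.degree u = S.degree v := by
  classical
  have hInadj : ∀ x y, x ∈ I → y ∈ I → x ≠ y → ¬ S.Adj x y := by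
    intro x y hx hy hxy
    have := hI hx hy hxy
    rw [compl_adj] at this
    exact this.2
  have hmemK : ∀ x w, x ∈ I → S.Adj x w → w ∈ K := by
    intro x w hx hxw
    have : w ∈ K ∪ I := hpart ▸ Finset.mem_univ w
    rcases Finset.mem_union.mp this with h | h
    · exact h
    · exact absurd hxw (hInadj x w hx h hxw.ne)
  have hNsub : ∀ x, x ∈ I → S.neighborFinset x ⊆ K := by
    intro x hx w hw
    exact hmemK x w hx ((S.mem_neighborFinset x w).mp hw)
  -- extract a single P4 from σ = 1
  have hone : ∀ u v : V, sigmaP4 S u v = 1 →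
      ∃ T, IsInducedP4 S T ∧ u ∈ T ∧ v ∈ T := by
    intro u v h
    rw [sigmaP4, Nat.card_eq_one_iff_unique] at h
    obtain ⟨_, ⟨⟨T, hT⟩⟩⟩ := h
    exact ⟨T, hT⟩
  have hadjσ : ∀ x y : {z // z ∈ I}, (phiEq S I).Adj x y → sigmaP4 S x.1 y.1 = 1 := by
    intro x y h
    rw [phiEq, SimpleGraph.fromRel_adj] at h
    rcases h.2 with h' | h'
    · exact h'
    · rw [sigmaP4_comm]; exact h'
  have walkadj : ∀ (x y : {z // z ∈ I}) (_ : (phiEq S I).Walk x y), x ≠ y →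
      ∃ w, (phiEq S I).Adj x w := by
    intro x y p
    induction p with
    | nil => intro h; exact absurd rfl h
    | cons h _ _ => intro _; exact ⟨_, h⟩
  -- no vertex of I sees all of K
  have hNoFull : ∀ v, v ∈ I → S.neighborFinset v ≠ K := by
    intro v hv hfull
    obtain ⟨u, hu, hune⟩ := Finset.exists_mem_ne (s := I) (by omega) v
    obtain ⟨p⟩ := hconn.preconnected ⟨v, hv⟩ ⟨u, hu⟩
    obtain ⟨w, hw⟩ := walkadj _ _ p
      (fun h => hune (congrArg Subtype.val h).symm)
    have hσ := hadjσ _ _ hw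
    have hne : v ≠ w.1 := fun h => hw.ne (Subtype.ext h)
    obtain ⟨T, hT, hvT, hwT⟩ := hone _ _ hσ
    obtain ⟨a, b, _, _, hwb, hvb, _⟩ :=
      extractP4 S K I hpart hK hI hv w.2 hne hT hvT hwT
    have hbK : b ∈ K := hmemK _ _ w.2 hwb
    rw [← hfull] at hbK
    exact hvb ((S.mem_neighborFinset v b).mp hbK)
  -- equal degrees along edges of phiEq
  have hdegadj : ∀ x y : {z // z ∈ I}, (phiEq S I).Adj x y →
      S.degree x.1 = S.degree y.1 := by
    intro x y h
    have hne : x.1 ≠ y.1 := fun hh => h.ne (Subtype.ext hh)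
    obtain ⟨c1, c2⟩ := sigma_one_cards S K I hpart hK hI x.2 y.2 hne (hadjσ x y h)
    rw [← S.card_neighborFinset_eq_degree, ← S.card_neighborFinset_eq_degree,
      ← Finset.card_sdiff_add_card_inter (S.neighborFinset x.1) (S.neighborFinset y.1),
      ← Finset.card_sdiff_add_card_inter (S.neighborFinset y.1) (S.neighborFinset x.1),
      c1, c2, Finset.inter_comm]
  have hdegwalk : ∀ (x y : {z // z ∈ I}) (_ : (phiEq S I).Walk x y),
      S.degree x.1 = S.degree y.1 := by
    intro x y p
    induction p with
    | nil => rfl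
    | cons h _ ih => exact (hdegadj _ _ h).trans ih
  have hdeg : ∀ u ∈ I, ∀ v ∈ I, S.degree u = S.degree v := by
    intro u hu v hv
    obtain ⟨p⟩ := hconn.preconnected ⟨u, hu⟩ ⟨v, hv⟩
    exact hdegwalk _ _ p
  refine ⟨?_, ?_, hdeg⟩
  · -- K.card = cliqueNum
    refine le_antisymm (SimpleGraph.IsClique.card_le_cliqueNum (tc := hK)) ?_
    obtain ⟨C, hC⟩ := S.exists_isNClique_cliqueNum
    rw [← hC.card_eq]
    rcases (C ∩ I).eq_empty_or_nonempty with hemp | ⟨x, hx⟩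
    · apply Finset.card_le_card
      intro c hc
      have : c ∈ K ∪ I := hpart ▸ Finset.mem_univ c
      rcases Finset.mem_union.mp this with h | h
      · exact h
      · exact absurd (Finset.mem_inter.mpr ⟨hc, h⟩) (by simp [hemp])
    · obtain ⟨hxC, hxI⟩ := Finset.mem_inter.mp hx
      have hsub : C ⊆ insert x (S.neighborFinset x) := by
        intro c hc
        by_cases hcx : c = x
        · rw [hcx]; exact Finset.mem_insert_self x _
        · exact Finset.mem_insert_of_mem ((S.mem_neighborFinset x c).mpr
            (hC.isClique hxC hc (Ne.symm hcx)))
      have h1 : C.card ≤ (S.neighborFinset x).card + 1 :=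
        le_trans (Finset.card_le_card hsub) (Finset.card_insert_le _ _)
      have h2 : (S.neighborFinset x).card < K.card :=
        Finset.card_lt_card (Finset.ssubset_iff_subset_ne.mpr
          ⟨hNsub x hxI, hNoFull x hxI⟩)
      omega
  · -- I.card = independence number
    refine le_antisymm (SimpleGraph.IsClique.card_le_cliqueNum (tc := hI)) ?_
    obtain ⟨C, hC⟩ := Sᶜ.exists_isNClique_cliqueNum
    rw [← hC.card_eq]
    have hCIanti : ∀ x y, x ∈ C → y ∈ C → x ≠ y → ¬ S.Adj x y := by
      intro x y hx hy hxy
      have := hC.isClique hx hy hxy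
      rw [compl_adj] at this
      exact this.2
    have hCsplit : C.card ≤ (C ∩ K).card + (C ∩ I).card := by
      have : C ⊆ (C ∩ K) ∪ (C ∩ I) := by
        intro c hc
        have : c ∈ K ∪ I := hpart ▸ Finset.mem_univ c
        rcases Finset.mem_union.mp this with h | h
        · exact Finset.mem_union_left _ (Finset.mem_inter.mpr ⟨hc, h⟩)
        · exact Finset.mem_union_right _ (Finset.mem_inter.mpr ⟨hc, h⟩)
      exact le_trans (Finset.card_le_card this) (Finset.card_union_le _ _)
    rcases (C ∩ K).eq_empty_or_nonempty with hemp | ⟨k, hk⟩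
    · calc C.card ≤ (C ∩ K).card + (C ∩ I).card := hCsplit
        _ = (C ∩ I).card := by rw [hemp]; simp
        _ ≤ I.card := Finset.card_le_card (Finset.inter_subset_right)
    · obtain ⟨hkC, hkK⟩ := Finset.mem_inter.mp hk
      rw [← hcov] at hkK
      obtain ⟨w, hwI, hwk⟩ := Finset.mem_biUnion.mp hkK
      have hwkadj : S.Adj w k := (S.mem_neighborFinset w k).mp hwk
      have hwC : w ∉ C := fun hwC => hCIanti w k hwC hkC hwkadj.ne hwkadj
      have hCK1 : (C ∩ K).card ≤ 1 := by
        apply Finset.card_le_one.mpr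
        intro k1 hk1 k2 hk2
        obtain ⟨hk1C, hk1K⟩ := Finset.mem_inter.mp hk1
        obtain ⟨hk2C, hk2K⟩ := Finset.mem_inter.mp hk2
        by_contra hne
        exact hCIanti k1 k2 hk1C hk2C hne (hK hk1K hk2K hne)
      have hCI : (C ∩ I).card ≤ I.card - 1 := by
        have : C ∩ I ⊆ I.erase w := by
          intro c hc
          obtain ⟨hcC, hcI⟩ := Finset.mem_inter.mp hc
          exact Finset.mem_erase.mpr ⟨fun h => hwC (h ▸ hcC), hcI⟩
        calc (C ∩ I).card ≤ (I.erase w).card := Finset.card_le_card this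
          _ = I.card - 1 := Finset.card_erase_of_mem hwI
      omega
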